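/- Consider an LQ network game satisfying the contraction assumption and let a^opt := (I − γ(G + Gᵀ))^{-1} β. Then SW(a^opt) ≤ ((1 − λ_min(γ(G + Gᵀ))) / (2 · (1 − λ_max(γ(G + Gᵀ)))²)) · ‖β‖₂². -/

import Mathlib

set_option maxHeartbeats 1000000


open Matrix

/-- In an LQ network game satisfying the contraction assumption, with
`a^opt := (I − γ(G + Gᵀ))⁻¹ β`, one has
`SW(a^opt) ≤ ((1 − λ_min(γ(G + Gᵀ))) / (2·(1 − λ_max(γ(G + Gᵀ)))²)) · ‖β‖₂²`. -/
theorem social_optimum_welfare_upper_bound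
    {N : ℕ} (hN : 0 < N)
    (G : Matrix (Fin N) (Fin N) ℝ)
    (hdiag : ∀ i, G i i = 0)
    (hGsmall : ∀ i j, |G i j| ≤ 1 / (N : ℝ))
    (γ : ℝ) (hγ : |γ| < 1 / 2)
    (β : Fin N → ℝ)
    (lo hi : Fin N → ℝ) (hlohi : ∀ i, lo i ≤ hi i)
    (A : Set (Fin N → ℝ)) (hA : A = Set.univ.pi fun i => Set.Icc (lo i) (hi i))
    (atil : ℝ) (hatil : 0 ≤ atil)
    (hsub : ∀ i, Set.Icc (-atil) atil ⊆ Set.Icc (lo i) (hi i))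
    (hβ : ∀ i, |β i| ≤ (1 - 2 * |γ|) * atil)
    (u : Fin N → (Fin N → ℝ) → ℝ)
    (hu : ∀ i a, u i a = -(1/2) * a i ^ 2 + β i * a i + γ * (∑ j, G i j * a j) * a i)
    (SW : (Fin N → ℝ) → ℝ) (hSW : ∀ a, SW a = ∑ i, u i a)
    (aopt : Fin N → ℝ) (haopt : aopt = (1 - γ • (G + Gᵀ))⁻¹ *ᵥ β)
    (hS : (γ • (G + Gᵀ)).IsHermitian) :
    SW aopt ≤ (1 - ⨅ i, hS.eigenvalues i) / (2 * (1 - ⨆ i, hS.eigenvalues i) ^ 2)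
      * ∑ i, β i ^ 2 := by
  classical
  have hNE : Nonempty (Fin N) := ⟨⟨0, hN⟩⟩
  have hNpos : (0:ℝ) < (N:ℝ) := by exact_mod_cast hN
  set lam : Fin N → ℝ := hS.eigenvalues with hlamdef
  -- eigenvalue bound via Gershgorin
  have heig : ∀ i, |lam i| ≤ 2 * |γ| := by
    intro i
    have hmem : lam i ∈ spectrum ℝ (γ • (G + Gᵀ)) := hS.eigenvalues_mem_spectrum_real i
    have hEig : Module.End.HasEigenvalue (Matrix.toLin' (γ • (G + Gᵀ))) (lam i) := by
      apply Module.End.HasEigenvalue.of_mem_spectrum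
      rw [show Matrix.toLin' (γ • (G + Gᵀ)) = Matrix.toLinAlgEquiv' (γ • (G + Gᵀ)) from rfl,
        AlgEquiv.spectrum_eq]
      exact hmem
    obtain ⟨k, hk⟩ := eigenvalue_mem_ball hEig
    rw [Metric.mem_closedBall] at hk
    have hdiag0 : (γ • (G + Gᵀ)) k k = 0 := by
      simp [hdiag k]
    rw [hdiag0] at hk
    have h1 : |lam i| ≤ ∑ j ∈ Finset.univ.erase k, ‖(γ • (G + Gᵀ)) k j‖ := by
      simpa [Real.dist_eq] using hk
    refine h1.trans ?_
    have hterm : ∀ j ∈ Finset.univ.erase k, ‖(γ • (G + Gᵀ)) k j‖ ≤ |γ| * (2 / N) := by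
      intro j _
      simp only [Matrix.smul_apply, Matrix.add_apply, transpose_apply, smul_eq_mul, Real.norm_eq_abs, abs_mul]
      refine mul_le_mul_of_nonneg_left ?_ (abs_nonneg γ)
      have h2 := hGsmall k j
      have h3 := hGsmall j k
      have := abs_add_le (G k j) (G j k)
      rw [div_eq_mul_inv, one_mul] at h2 h3
      calc |G k j + G j k| ≤ |G k j| + |G j k| := abs_add_le _ _
        _ ≤ 2 / N := by rw [div_eq_mul_inv]; linarith
    calc ∑ j ∈ Finset.univ.erase k, ‖(γ • (G + Gᵀ)) k j‖
        ≤ ∑ _j ∈ Finset.univ.erase k, |γ| * (2 / N) := Finset.sum_le_sum hterm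
      _ = ((Finset.univ.erase k).card : ℝ) * (|γ| * (2 / N)) := by
          rw [Finset.sum_const, nsmul_eq_mul]
      _ ≤ (N : ℝ) * (|γ| * (2 / N)) := by
          refine mul_le_mul_of_nonneg_right ?_ (by positivity)
          have : (Finset.univ.erase k).card ≤ N := by
            calc (Finset.univ.erase k).card ≤ (Finset.univ : Finset (Fin N)).card :=
              Finset.card_le_card (Finset.erase_subset _ _)
              _ = N := by simp
          exact_mod_cast this
      _ = 2 * |γ| := by field_simp
  have h2γ : 2 * |γ| < 1 := by linarith
  have hlt1 : ∀ i, lam i < 1 := fun i =>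
    lt_of_le_of_lt (le_trans (le_abs_self _) (heig i)) h2γ
  -- sup/inf facts
  have hbddA : BddAbove (Set.range lam) := (Set.finite_range lam).bddAbove
  have hsup_le : (⨆ i, lam i) ≤ 2 * |γ| := ciSup_le fun i => (le_abs_self _).trans (heig i)
  have hsup_lt : (⨆ i, lam i) < 1 := lt_of_le_of_lt hsup_le h2γ
  have hle_sup : ∀ i, lam i ≤ ⨆ i, lam i := fun i => le_ciSup hbddA i
  have hinf_le_sup : (⨅ i, lam i) ≤ ⨆ i, lam i :=
    le_trans (ciInf_le (Set.finite_range lam).bddBelow ⟨0, hN⟩) (hle_sup ⟨0, hN⟩)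
  set m : ℝ := 1 - ⨆ i, lam i with hmdef
  have hm : 0 < m := by rw [hmdef]; linarith
  set d : Fin N → ℝ := fun i => 1 - lam i with hddef
  have hd : ∀ i, 0 < d i := fun i => show (0:ℝ) < 1 - lam i from sub_pos.mpr (hlt1 i)
  have hmd : ∀ i, m ≤ d i := fun i => show m ≤ 1 - lam i from by
    rw [hmdef]; linarith [hle_sup i]
  -- spectral decomposition
  set U : Matrix (Fin N) (Fin N) ℝ := (hS.eigenvectorUnitary : Matrix (Fin N) (Fin N) ℝ)
    with hUdef
  have hU1 : Uᵀ * U = 1 := by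
    have := Matrix.mem_unitaryGroup_iff'.mp (hS.eigenvectorUnitary).2
    rwa [star_eq_conjTranspose, conjTranspose_eq_transpose_of_trivial] at this
  have hU2 : U * Uᵀ = 1 := by
    have := Matrix.mem_unitaryGroup_iff.mp (hS.eigenvectorUnitary).2
    rwa [star_eq_conjTranspose, conjTranspose_eq_transpose_of_trivial] at this
  have hspec : γ • (G + Gᵀ) = U * diagonal lam * Uᵀ := by
    have h0 := hS.spectral_theorem
    rw [Unitary.conjStarAlgAut_apply, star_eq_conjTranspose, conjTranspose_eq_transpose_of_trivial] at h0
    simp only [RCLike.ofReal_real_eq_id, Function.id_comp] at h0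
    exact h0
  have hMdec : (1 : Matrix (Fin N) (Fin N) ℝ) - γ • (G + Gᵀ) = U * diagonal d * Uᵀ := by
    have hdd : diagonal d = 1 - diagonal lam := by
      ext i j
      by_cases h : i = j <;> simp [Matrix.diagonal_apply, Matrix.one_apply, h, hddef]
    rw [hdd, Matrix.mul_sub, Matrix.mul_one, Matrix.sub_mul, hU2, ← hspec]
  set C : Matrix (Fin N) (Fin N) ℝ := U * diagonal (fun i => (d i)⁻¹) * Uᵀ with hCdef
  have hCright : ((1 : Matrix (Fin N) (Fin N) ℝ) - γ • (G + Gᵀ)) * C = 1 := by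
    rw [hMdec, hCdef]
    simp only [Matrix.mul_assoc]
    rw [show Uᵀ * (U * (diagonal (fun i => (d i)⁻¹) * Uᵀ))
        = diagonal (fun i => (d i)⁻¹) * Uᵀ from by
      rw [← Matrix.mul_assoc, hU1, Matrix.one_mul]]
    have hDD : diagonal d * diagonal (fun i => (d i)⁻¹) = (1 : Matrix (Fin N) (Fin N) ℝ) := by
      rw [Matrix.diagonal_mul_diagonal]
      have : (fun i => d i * (d i)⁻¹) = fun _ : Fin N => (1:ℝ) := by
        funext i
        exact mul_inv_cancel₀ (hd i).ne'
      rw [this, Matrix.diagonal_one]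
    rw [← Matrix.mul_assoc (diagonal d), hDD, Matrix.one_mul, hU2]
  have hinv : ((1 : Matrix (Fin N) (Fin N) ℝ) - γ • (G + Gᵀ))⁻¹ = C :=
    Matrix.inv_eq_right_inv hCright
  have hMa : ((1 : Matrix (Fin N) (Fin N) ℝ) - γ • (G + Gᵀ)) *ᵥ aopt = β := by
    rw [haopt, Matrix.mulVec_mulVec, hinv, hCright, Matrix.one_mulVec]
  -- componentwise optimality equation
  have hβi : ∀ i, β i = aopt i - γ * ∑ j, (G i j + G j i) * aopt j := by
    intro i
    have hGG : ((G + Gᵀ) *ᵥ aopt) i = ∑ j, (G i j + G j i) * aopt j := by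
      simp [Matrix.mulVec, dotProduct, Matrix.add_apply, Matrix.transpose_apply]
    rw [← hMa, Matrix.sub_mulVec, Matrix.one_mulVec, Matrix.smul_mulVec,
      Pi.sub_apply, Pi.smul_apply, smul_eq_mul, hGG]
  -- SW at aopt equals half of β ⬝ᵥ aopt
  have hswap : (∑ i, ∑ j, G j i * (aopt j * aopt i)) = ∑ i, ∑ j, G i j * (aopt j * aopt i) := by
    rw [Finset.sum_comm]
    exact Finset.sum_congr rfl fun i _ => Finset.sum_congr rfl fun j _ => by ring
  have key0 : SW aopt = (1/2) * (β ⬝ᵥ aopt) := by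
    have hterm : ∀ i, u i aopt = (1/2) * (β i * aopt i)
        + (γ/2) * ((∑ j, G i j * (aopt j * aopt i)) - ∑ j, G j i * (aopt j * aopt i)) := by
      intro i
      have e1 : (∑ j, (G i j + G j i) * aopt j) * aopt i
          = (∑ j, G i j * (aopt j * aopt i)) + ∑ j, G j i * (aopt j * aopt i) := by
        rw [Finset.sum_mul, ← Finset.sum_add_distrib]
        exact Finset.sum_congr rfl fun j _ => by ring
      have e2 : (∑ j, G i j * aopt j) * aopt i = ∑ j, G i j * (aopt j * aopt i) := by
        rw [Finset.sum_mul]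
        exact Finset.sum_congr rfl fun j _ => by ring
      rw [hu i aopt, hβi i]
      linear_combination (-(γ/2)) * e1 + γ * e2
    rw [hSW, Finset.sum_congr rfl fun i _ => hterm i, Finset.sum_add_distrib,
      ← Finset.mul_sum, ← Finset.mul_sum, Finset.sum_sub_distrib, hswap, sub_self,
      mul_zero, add_zero, dotProduct]
  -- diagonalize the quadratic form
  set c : Fin N → ℝ := Uᵀ *ᵥ β with hcdef
  have hdot : β ⬝ᵥ aopt = ∑ i, (d i)⁻¹ * (c i * c i) := by
    have hvm : β ᵥ* U = c := by
      rw [hcdef, ← Matrix.transpose_transpose U, Matrix.vecMul_transpose,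
        Matrix.transpose_transpose]
    rw [haopt, hinv, hCdef, ← Matrix.mulVec_mulVec, ← Matrix.mulVec_mulVec,
      Matrix.dotProduct_mulVec, hvm, ← hcdef]
    simp only [dotProduct, Matrix.mulVec_diagonal]
    exact Finset.sum_congr rfl fun i _ => by ring
  have hnorm : (∑ i, c i * c i) = ∑ i, β i ^ 2 := by
    have h1 : (∑ i, c i * c i) = c ⬝ᵥ (Uᵀ *ᵥ β) := by
      rw [← hcdef, dotProduct]
    rw [h1, Matrix.dotProduct_mulVec, Matrix.vecMul_transpose, hcdef,
      Matrix.mulVec_mulVec, hU2, Matrix.one_mulVec]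
    exact Finset.sum_congr rfl fun i _ => by ring
  -- final estimates
  have hsum_le : (∑ i, (d i)⁻¹ * (c i * c i)) ≤ m⁻¹ * ∑ i, β i ^ 2 := by
    rw [← hnorm, Finset.mul_sum]
    refine Finset.sum_le_sum fun i _ => ?_
    exact mul_le_mul_of_nonneg_right (inv_anti₀ hm (hmd i)) (mul_self_nonneg _)
  have hβsum : (0:ℝ) ≤ ∑ i, β i ^ 2 := by positivity
  have hfin : SW aopt ≤ (1/2) * (m⁻¹ * ∑ i, β i ^ 2) := by
    rw [key0, hdot]
    linarith [hsum_le]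
  refine hfin.trans ?_
  have hminf : m ≤ 1 - ⨅ i, lam i := by simp only [hmdef]; linarith [hinf_le_sup]
  rw [show (1/2) * (m⁻¹ * ∑ i, β i ^ 2) = m / (2 * m^2) * ∑ i, β i ^ 2 from by
    field_simp]
  refine mul_le_mul_of_nonneg_right ?_ hβsum
  exact (div_le_div_iff_of_pos_right (mul_pos two_pos (pow_pos hm 2))).mpr hminf
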